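/- Let n ≥ 2 be an integer. Let Q(t) = 1 + Σ_{k=2}^{n−2} b_k t^k + t^n be a real polynomial with all coefficients b_k ≥ 0 (where the middle sum is empty if n ≤ 3), and let P(t) = Σ_{k=2}^{ℓ} a_k t^k be a real polynomial with all coefficients a_k ≥ 0 and degree bound ℓ ≤ 2n − 1. Assume P(1) ≤ Q(1). Then for every integer m ≥ 3 and every real t ≥ 1, one has m·P(t) < Q(t)^m. -/

import Mathlib

lemma aux_pow_stmt5 (C D : ℝ) (hC : 0 ≤ C) (hD : 2 ≤ D) (h3 : 3 * C < D ^ 3) :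
    ∀ m : ℕ, 3 ≤ m → (m : ℝ) * C < D ^ m := by
  intro m hm
  induction m, hm using Nat.le_induction with
  | base => push_cast; linarith
  | succ m hm ih =>
    have hD1 : (1:ℝ) ≤ D := by linarith
    have hCm : C < D ^ m := by
      have h1 : C < D ^ 3 := by linarith
      have h2 : D ^ 3 ≤ D ^ m := pow_le_pow_right₀ hD1 hm
      linarith
    have hpos : (0:ℝ) ≤ D ^ m := by positivity
    have h2 : 2 * D ^ m ≤ D ^ (m+1) := by
      rw [pow_succ]; nlinarith
    push_cast
    nlinarith

theorem stmt_5 (n : ℕ) (hn : 2 ≤ n) (ℓ : ℕ) (hℓ : ℓ ≤ 2 * n - 1)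
    (a b : ℕ → ℝ) (ha : ∀ k, 0 ≤ a k) (hb : ∀ k, 0 ≤ b k)
    (P Q : ℝ → ℝ)
    (hPdef : ∀ t : ℝ, P t = ∑ k ∈ Finset.Icc 2 ℓ, a k * t ^ k)
    (hQdef : ∀ t : ℝ, Q t = 1 + (∑ k ∈ Finset.Icc 2 (n - 2), b k * t ^ k) + t ^ n)
    (hHilali : P 1 ≤ Q 1) :
    ∀ m : ℕ, 3 ≤ m → ∀ t : ℝ, 1 ≤ t → (m : ℝ) * P t < Q t ^ m := by
  intro m hm t ht
  set c := ∑ k ∈ Finset.Icc 2 (n-2), b k with hcdef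
  have hc : 0 ≤ c := Finset.sum_nonneg fun k _ => hb k
  have ht0 : (0:ℝ) ≤ t := by linarith
  have hu : (1:ℝ) ≤ t ^ n := one_le_pow₀ ht
  have hP1 : P 1 = ∑ k ∈ Finset.Icc 2 ℓ, a k := by simp [hPdef]
  have hQ1 : Q 1 = 2 + c := by simp [hQdef]; ring
  have hPt : P t ≤ (2 + c) * t ^ (2 * n) := by
    rw [hPdef]
    calc ∑ k ∈ Finset.Icc 2 ℓ, a k * t ^ k
        ≤ ∑ k ∈ Finset.Icc 2 ℓ, a k * t ^ (2 * n) := by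
          apply Finset.sum_le_sum
          intro k hk
          have hk' : k ≤ 2 * n :=
            le_trans (Finset.mem_Icc.mp hk).2 (le_trans hℓ (Nat.sub_le _ _))
          exact mul_le_mul_of_nonneg_left (pow_le_pow_right₀ ht hk') (ha k)
      _ = (∑ k ∈ Finset.Icc 2 ℓ, a k) * t ^ (2*n) := by rw [← Finset.sum_mul]
      _ ≤ (2 + c) * t ^ (2*n) := by
          have h0 : (0:ℝ) ≤ t ^ (2*n) := by positivity
          have : P 1 ≤ 2 + c := by rw [hQ1] at hHilali; exact hHilali
          rw [hP1] at this
          exact mul_le_mul_of_nonneg_right this h0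
  have hQt : 1 + c + t ^ n ≤ Q t := by
    rw [hQdef]
    have hS : c ≤ ∑ k ∈ Finset.Icc 2 (n-2), b k * t ^ k := by
      rw [hcdef]
      apply Finset.sum_le_sum
      intro k _
      have h1 : (1:ℝ) ≤ t ^ k := one_le_pow₀ ht
      nlinarith [hb k]
    linarith
  have key : 3 * ((2+c) * (t^n)^2) < (1 + c + t^n)^3 := by
    nlinarith [mul_nonneg (sub_nonneg.2 hu) (sq_nonneg (t^n - 1)),
      mul_nonneg hc (sq_nonneg (t^n)), mul_nonneg (mul_nonneg hc hc) hc,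
      mul_nonneg hc hc, mul_nonneg (mul_nonneg hc hc) (le_trans zero_le_one hu),
      mul_nonneg hc (le_trans zero_le_one hu)]
  have hC : 0 ≤ (2+c) * (t^n)^2 := by positivity
  have hD : (2:ℝ) ≤ 1 + c + t^n := by linarith
  have main := aux_pow_stmt5 _ _ hC hD key m hm
  have h1 : (m:ℝ) * P t ≤ (m:ℝ) * ((2+c) * (t^n)^2) := by
    apply mul_le_mul_of_nonneg_left _ (Nat.cast_nonneg m)
    have : (t^n)^2 = t^(2*n) := by rw [← pow_mul, mul_comm]
    rw [this]; exact hPt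
  have h2 : (1 + c + t^n)^m ≤ Q t ^ m :=
    pow_le_pow_left₀ (by linarith) hQt m
  linarith
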